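/- In a commutative differential graded algebra ΛV freely generated by degree-1 elements x₁,…,x_{2k}, n₁,…,n_{2k-1}, m with dxᵢ = 0, dnᵢ = xᵢx_{i+1}, and dm = Σᵢ xᵢnᵢ + p where p ∈ Λ²⟨x₁,…,x_{2k}⟩, there is a CDGA isomorphism f to the same algebra with p = 0, given by f(xᵢ)=xᵢ, f(m)=m, and f(nⱼ) = nⱼ - Σ_{i>j} t_{j,i} xᵢ where p = Σ_{j<i} t_{j,i} xⱼxᵢ. In particular f commutes with the differentials. -/
import Mathlib


noncomputable section

/-- Index type for the degree-1 generators `x₁,…,x_{2k}, n₁,…,n_{2k-1}, m`. -/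
abbrev Ik (k : ℕ) := Fin (2 * k) ⊕ Fin (2 * k - 1) ⊕ Unit

/-- The free graded-commutative algebra on these degree-1 generators, modelled as the
exterior algebra of `ℝ^{Ik k}`. -/
abbrev Lk (k : ℕ) := ExteriorAlgebra ℝ (Ik k → ℝ)

def X (k : ℕ) (i : Fin (2 * k)) : Lk k := ExteriorAlgebra.ι ℝ (Pi.single (Sum.inl i) 1)

def N (k : ℕ) (j : Fin (2 * k - 1)) : Lk k :=
  ExteriorAlgebra.ι ℝ (Pi.single (Sum.inr (Sum.inl j)) 1)

def M (k : ℕ) : Lk k := ExteriorAlgebra.ι ℝ (Pi.single (Sum.inr (Sum.inr ())) 1)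

def e1 (k : ℕ) (j : Fin (2 * k - 1)) : Fin (2 * k) := ⟨j.1, by have := j.2; omega⟩

def e2 (k : ℕ) (j : Fin (2 * k - 1)) : Fin (2 * k) := ⟨j.1 + 1, by have := j.2; omega⟩

set_option maxHeartbeats 1000000 in
/-- let `d` be the differential with `dxᵢ = 0`, `dnᵢ = xᵢx_{i+1}` and
`dm = Σᵢ xᵢnᵢ + p` where `p = Σ_{j<i} t_{j,i} xⱼxᵢ ∈ Λ²⟨x₁,…,x_{2k}⟩`, and let `d'` be
the differential of the unperturbed model (`p = 0`).  Then there is a CDGA isomorphism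
`f` with `f(xᵢ) = xᵢ`, `f(m) = m`, `f(nⱼ) = nⱼ - Σ_{i>j} t_{j,i} xᵢ`, commuting with the
differentials. -/
theorem stmt9 (k : ℕ) (hk : 1 ≤ k) (t : Fin (2 * k) → Fin (2 * k) → ℝ)
    (d d' : Lk k →ₗ[ℝ] Lk k)
    (hleib : ∀ (v : Ik k → ℝ) (y : Lk k),
      d (ExteriorAlgebra.ι ℝ v * y)
        = d (ExteriorAlgebra.ι ℝ v) * y - ExteriorAlgebra.ι ℝ v * d y)
    (hleib' : ∀ (v : Ik k → ℝ) (y : Lk k),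
      d' (ExteriorAlgebra.ι ℝ v * y)
        = d' (ExteriorAlgebra.ι ℝ v) * y - ExteriorAlgebra.ι ℝ v * d' y)
    (hone : d 1 = 0) (hone' : d' 1 = 0)
    (hx : ∀ i, d (X k i) = 0) (hx' : ∀ i, d' (X k i) = 0)
    (hn : ∀ j, d (N k j) = X k (e1 k j) * X k (e2 k j))
    (hn' : ∀ j, d' (N k j) = X k (e1 k j) * X k (e2 k j))
    (hm : d (M k) = (∑ j : Fin (2 * k - 1), X k (e1 k j) * N k j)
        + ∑ a : Fin (2 * k), ∑ b : Fin (2 * k),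
            (if a.1 < b.1 then t a b else 0) • (X k a * X k b))
    (hm' : d' (M k) = ∑ j : Fin (2 * k - 1), X k (e1 k j) * N k j) :
    ∃ f : Lk k ≃ₐ[ℝ] Lk k,
      (∀ i, f (X k i) = X k i) ∧
      f (M k) = M k ∧
      (∀ j : Fin (2 * k - 1),
        f (N k j) = N k j
          - ∑ i : Fin (2 * k), (if j.1 < i.1 then t (e1 k j) i else 0) • X k i) ∧
      ∀ y : Lk k, f (d y) = d' (f y) := by
  classical
  set ε : Fin (2 * k - 1) → Fin (2 * k) → ℝ :=
    fun j i => if j.1 < i.1 then t (e1 k j) i else 0 with hεdef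
  set B := Pi.basisFun ℝ (Ik k) with hBdef
  set w : Fin (2 * k - 1) → (Ik k → ℝ) :=
    fun j => ∑ i, ε j i • (Pi.single (Sum.inl i) (1 : ℝ) : Ik k → ℝ) with hwdef
  set gfun : Ik k → (Ik k → ℝ) :=
    Sum.elim (fun i => Pi.single (Sum.inl i) 1)
      (Sum.elim (fun j => Pi.single (Sum.inr (Sum.inl j)) 1 - w j)
        (fun _ => Pi.single (Sum.inr (Sum.inr ())) 1)) with hgfdef
  set hfun : Ik k → (Ik k → ℝ) :=
    Sum.elim (fun i => Pi.single (Sum.inl i) 1)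
      (Sum.elim (fun j => Pi.single (Sum.inr (Sum.inl j)) 1 + w j)
        (fun _ => Pi.single (Sum.inr (Sum.inr ())) 1)) with hhfdef
  set g : (Ik k → ℝ) →ₗ[ℝ] (Ik k → ℝ) := B.constr ℝ gfun with hgdef
  set h : (Ik k → ℝ) →ₗ[ℝ] (Ik k → ℝ) := B.constr ℝ hfun with hhdef
  have hB : ∀ b : Ik k, B b = Pi.single b 1 := fun b => Pi.basisFun_apply ℝ (Ik k) b
  have hg : ∀ b, g (Pi.single b 1) = gfun b := by
    intro b; rw [← hB]; exact B.constr_basis ℝ gfun b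
  have hh : ∀ b, h (Pi.single b 1) = hfun b := by
    intro b; rw [← hB]; exact B.constr_basis ℝ hfun b
  have hgx : ∀ i : Fin (2 * k), g (Pi.single (Sum.inl i) 1) = Pi.single (Sum.inl i) 1 :=
    fun i => hg (Sum.inl i)
  have hhx : ∀ i : Fin (2 * k), h (Pi.single (Sum.inl i) 1) = Pi.single (Sum.inl i) 1 :=
    fun i => hh (Sum.inl i)
  have hgn : ∀ j, g (Pi.single (Sum.inr (Sum.inl j)) 1)
      = Pi.single (Sum.inr (Sum.inl j)) 1 - w j := fun j => hg (Sum.inr (Sum.inl j))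
  have hhn : ∀ j, h (Pi.single (Sum.inr (Sum.inl j)) 1)
      = Pi.single (Sum.inr (Sum.inl j)) 1 + w j := fun j => hh (Sum.inr (Sum.inl j))
  have hgm : g (Pi.single (Sum.inr (Sum.inr ())) 1) = Pi.single (Sum.inr (Sum.inr ())) 1 :=
    hg (Sum.inr (Sum.inr ()))
  have hhm : h (Pi.single (Sum.inr (Sum.inr ())) 1) = Pi.single (Sum.inr (Sum.inr ())) 1 :=
    hh (Sum.inr (Sum.inr ()))
  have hgw : ∀ j, g (w j) = w j := by
    intro j
    rw [hwdef, map_sum]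
    exact Finset.sum_congr rfl fun i _ => by rw [map_smul, hgx]
  have hhw : ∀ j, h (w j) = w j := by
    intro j
    rw [hwdef, map_sum]
    exact Finset.sum_congr rfl fun i _ => by rw [map_smul, hhx]
  have hgh : g ∘ₗ h = LinearMap.id := by
    refine B.ext fun b => ?_
    rw [LinearMap.comp_apply, LinearMap.id_apply, hB]
    rcases b with i | j | u
    · rw [hhx, hgx]
    · rw [hhn, map_add, hgn, hgw]; abel
    · rw [hhm, hgm]
  have hhg : h ∘ₗ g = LinearMap.id := by
    refine B.ext fun b => ?_
    rw [LinearMap.comp_apply, LinearMap.id_apply, hB]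
    rcases b with i | j | u
    · rw [hgx, hhx]
    · rw [hgn, map_sub, hhn, hhw]; abel
    · rw [hgm, hhm]
  set f : Lk k ≃ₐ[ℝ] Lk k := AlgEquiv.ofAlgHom (ExteriorAlgebra.map g) (ExteriorAlgebra.map h)
    (by rw [ExteriorAlgebra.map_comp_map, hgh, ExteriorAlgebra.map_id])
    (by rw [ExteriorAlgebra.map_comp_map, hhg, ExteriorAlgebra.map_id]) with hfdef
  have hfι : ∀ v : Ik k → ℝ, f (ExteriorAlgebra.ι ℝ v) = ExteriorAlgebra.ι ℝ (g v) :=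
    fun v => ExteriorAlgebra.map_apply_ι g v
  have hfX : ∀ i, f (X k i) = X k i := by
    intro i
    rw [X, hfι, hgx]
  have hfN : ∀ j : Fin (2 * k - 1),
      f (N k j) = N k j - ∑ i : Fin (2 * k), ε j i • X k i := by
    intro j
    rw [N, hfι, hgn, map_sub, hwdef]
    congr 1
    rw [map_sum]
    exact Finset.sum_congr rfl fun i _ => by rw [map_smul]; rfl
  have hfM : f (M k) = M k := by
    rw [M, hfι, hgm]
  -- the key computation on generators
  have hP : ∑ j : Fin (2 * k - 1), X k (e1 k j) * ∑ i : Fin (2 * k), ε j i • X k i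
      = ∑ a : Fin (2 * k), ∑ b : Fin (2 * k),
          (if a.1 < b.1 then t a b else 0) • (X k a * X k b) := by
    have hinj : Function.Injective (e1 k) := by
      intro a b hab
      have h := congrArg Fin.val hab
      exact Fin.ext h
    have h1 : ∀ j : Fin (2 * k - 1),
        X k (e1 k j) * ∑ i : Fin (2 * k), ε j i • X k i
          = ∑ b : Fin (2 * k), (if (e1 k j).1 < b.1 then t (e1 k j) b else 0)
              • (X k (e1 k j) * X k b) := by
      intro j
      rw [Finset.mul_sum]
      exact Finset.sum_congr rfl fun b _ => by rw [mul_smul_comm]; rfl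
    set F : Fin (2 * k) → Lk k :=
      fun a => ∑ b : Fin (2 * k), (if a.1 < b.1 then t a b else 0) • (X k a * X k b) with hFdef
    have h4 : ∑ j : Fin (2 * k - 1), F (e1 k j)
        = ∑ a ∈ Finset.univ.image (e1 k), F a :=
      (Finset.sum_image (fun x _ y _ hxy => hinj hxy)).symm
    have h5 : ∑ a ∈ Finset.univ.image (e1 k), F a = ∑ a : Fin (2 * k), F a := by
      refine Finset.sum_subset (Finset.subset_univ _) ?_
      intro a _ ha
      refine Finset.sum_eq_zero fun b _ => ?_
      have hb : b.1 < 2 * k := b.2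
      have hna : ¬ a.1 < 2 * k - 1 := by
        intro hlt
        exact ha (Finset.mem_image.mpr ⟨⟨a.1, hlt⟩, Finset.mem_univ _, Fin.ext rfl⟩)
      rw [if_neg (by omega), zero_smul]
    rw [Finset.sum_congr rfl fun j _ => h1 j]
    exact h4.trans h5
  have hkey : ∀ v : Ik k → ℝ,
      f (d (ExteriorAlgebra.ι ℝ v)) = d' (f (ExteriorAlgebra.ι ℝ v)) := by
    have hlin : (f.toLinearMap ∘ₗ d ∘ₗ ExteriorAlgebra.ι ℝ)
        = (d' ∘ₗ f.toLinearMap ∘ₗ ExteriorAlgebra.ι ℝ) := by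
      refine B.ext fun b => ?_
      simp only [LinearMap.comp_apply, AlgEquiv.toLinearMap_apply, hB]
      rcases b with i | j | u
      · show f (d (X k i)) = d' (f (X k i))
        rw [hx, map_zero, hfX, hx']
      · show f (d (N k j)) = d' (f (N k j))
        rw [hn, map_mul, hfX, hfX, hfN, map_sub, hn', map_sum]
        have : ∑ i : Fin (2 * k), d' (ε j i • X k i) = 0 := by
          refine Finset.sum_eq_zero fun i _ => ?_
          rw [map_smul, hx', smul_zero]
        rw [this, sub_zero]
      · show f (d (M k)) = d' (f (M k))
        rw [hm, hfM, hm', map_add, map_sum]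
        have h2 : ∀ j : Fin (2 * k - 1), f (X k (e1 k j) * N k j)
            = X k (e1 k j) * N k j - X k (e1 k j) * ∑ i : Fin (2 * k), ε j i • X k i := by
          intro j
          rw [map_mul, hfX, hfN, mul_sub]
        rw [Finset.sum_congr rfl fun j _ => h2 j, Finset.sum_sub_distrib, hP]
        have h3 : f (∑ a : Fin (2 * k), ∑ b : Fin (2 * k),
            (if a.1 < b.1 then t a b else 0) • (X k a * X k b))
              = ∑ a : Fin (2 * k), ∑ b : Fin (2 * k),
            (if a.1 < b.1 then t a b else 0) • (X k a * X k b) := by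
          rw [map_sum]
          refine Finset.sum_congr rfl fun a _ => ?_
          rw [map_sum]
          refine Finset.sum_congr rfl fun b _ => ?_
          rw [map_smul, map_mul, hfX, hfX]
        rw [h3]
        abel
    intro v
    exact congrArg (fun L => L v) hlin
  have hcomm : ∀ y : Lk k, f (d y) = d' (f y) := by
    set S : Submodule ℝ (Lk k) :=
      LinearMap.ker (d' ∘ₗ f.toLinearMap - f.toLinearMap ∘ₗ d) with hSdef
    have hmem : ∀ y : Lk k, y ∈ S ↔ f (d y) = d' (f y) := by
      intro y
      rw [hSdef, LinearMap.mem_ker, LinearMap.sub_apply, LinearMap.comp_apply,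
        LinearMap.comp_apply, AlgEquiv.toLinearMap_apply, AlgEquiv.toLinearMap_apply,
        sub_eq_zero, eq_comm]
    have h1 : (1 : Lk k) ∈ S := by
      rw [hmem, hone, map_zero, map_one, hone']
    have hmul : ∀ a : Lk k, ∀ y ∈ S, a * y ∈ S := by
      intro a
      induction a using ExteriorAlgebra.induction with
      | algebraMap r =>
        intro y hy
        rw [← Algebra.smul_def]
        exact S.smul_mem r hy
      | ι v =>
        intro y hy
        rw [hmem] at hy ⊢
        rw [hleib]
        simp only [map_sub, map_mul]
        rw [hkey v, hy, hfι, ← hleib' (g v) (f y)]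
      | mul a b ha hb =>
        intro y hy
        rw [mul_assoc]
        exact ha _ (hb y hy)
      | add a b ha hb =>
        intro y hy
        rw [add_mul]
        exact S.add_mem (ha y hy) (hb y hy)
    intro y
    rw [← hmem]
    have := hmul y 1 h1
    rwa [mul_one] at this
  refine ⟨f, hfX, hfM, ?_, hcomm⟩
  intro j
  rw [hfN]
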